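/- If A = x^a(x+1)^b(x+α)^c(x+α+1)^d ∈ F_4[x] is trivially bi-unitary perfect with ω(A) ≥ 3, then ω(A) = 4, all of a, b, c, d lie in T = {2} ∪ {2^n − 1 : n ≥ 1}, a = b, and c = d; equivalently, A = A₁A₂ with A₁, A₂ ∈ Σ. -/

import Mathlib

open Polynomial

variable {F : Type*} [Field F]

/-- `D` is a (monic) unitary divisor of `S`: `D ∣ S` and `gcd(D, S/D) = 1`. -/
def IsUnitaryDivisor (D S : Polynomial F) : Prop :=
  D.Monic ∧ D ∣ S ∧ IsCoprime D (S / D)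

/-- `D` is a (monic) bi-unitary divisor of `S`: `gcd_u(D, S/D) = 1`, i.e. the only common
monic unitary divisor of `D` and `S/D` is `1`. -/
def IsBiunitaryDivisor (D S : Polynomial F) : Prop :=
  D.Monic ∧ D ∣ S ∧
    ∀ G : Polynomial F, IsUnitaryDivisor G D → IsUnitaryDivisor G (S / D) → G = 1

/-- `σ(S)`: the sum of all monic divisors of `S`. -/
noncomputable def sigma' (S : Polynomial F) : Polynomial F :=
  ∑ᶠ D ∈ {D : Polynomial F | D.Monic ∧ D ∣ S}, D

/-- `σ**(S)`: the sum of all monic bi-unitary divisors of `S`. -/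
noncomputable def sigmaStarStar (S : Polynomial F) : Polynomial F :=
  ∑ᶠ D ∈ {D : Polynomial F | IsBiunitaryDivisor D S}, D

/-- `S` is bi-unitary perfect: `σ**(S) = S`. -/
def IsBUP (S : Polynomial F) : Prop := sigmaStarStar S = S

/-- `ω(S)`: the number of distinct monic irreducible factors of `S`. -/
noncomputable def omegaCount (S : Polynomial F) : ℕ :=
  {P : Polynomial F | P.Monic ∧ Irreducible P ∧ P ∣ S}.ncard

/-- `A` is trivially bi-unitary perfect: it is b.u.p. and is a product `A₀ ⋯ A_r` (`r ≥ 1`)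
of pairwise coprime non-unit b.u.p. polynomials. -/
def IsTriviallyBUP (A : Polynomial F) : Prop :=
  IsBUP A ∧ ∃ (r : ℕ) (B : Fin (r + 1) → Polynomial F), 1 ≤ r ∧
    A = ∏ i, B i ∧ (∀ i, IsBUP (B i) ∧ ¬ IsUnit (B i)) ∧
    ∀ i j, i ≠ j → IsCoprime (B i) (B j)

/-- `A` is indecomposable bi-unitary perfect: b.u.p. but not trivially b.u.p. -/
def IsIBUP (A : Polynomial F) : Prop := IsBUP A ∧ ¬ IsTriviallyBUP A

/-- The field with four elements. -/
abbrev F4 := GaloisField 2 2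

/-- The exponent set `𝒯 = {2} ∪ {2^n - 1 : n ≥ 1}`. -/
def TSet : Set ℕ := {r | 0 < r ∧ (r = 2 ∨ ∃ n : ℕ, 1 ≤ n ∧ r = 2 ^ n - 1)}

/-- The set `Σ = {(x²+x)^r, (x²+x+1)^r : r ∈ 𝒯}`. -/
def SigmaSet : Set (Polynomial F4) :=
  {A | ∃ r ∈ TSet, A = (X ^ 2 + X) ^ r ∨ A = (X ^ 2 + X + 1) ^ r}

namespace S12
open Finset
open scoped Classical

lemma twoF : (2 : F4) = 0 := by
  have := CharP.cast_eq_zero F4 2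
  simpa using this

lemma twoR : (2 : Polynomial F4) = 0 := by
  have := CharP.cast_eq_zero (Polynomial F4) 2
  simpa using this

lemma lin_eq_sub (u : F4) : X + C u = X - C u := by
  rw [sub_eq_add_neg, CharTwo.neg_eq]

lemma lin_monic (u : F4) : (X + C u).Monic := monic_X_add_C u

lemma lin_ne_zero (u : F4) : (X + C u) ≠ 0 := (lin_monic u).ne_zero

lemma lin_irr (u : F4) : Irreducible (X + C u) := by
  rw [lin_eq_sub]; exact irreducible_X_sub_C u

lemma lin_prime (u : F4) : Prime (X + C u) := (lin_irr u).prime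

lemma lin_roots (u : F4) : (X + C u).roots = {u} := by
  rw [lin_eq_sub]; exact roots_X_sub_C u

lemma lin_natDegree (u : F4) : (X + C u).natDegree = 1 := natDegree_X_add_C u

lemma lin_inj {u v : F4} (h : (X + C u) = (X + C v)) : u = v := by
  have := add_left_cancel h
  exact C_injective this

lemma lin_eval (u v : F4) : (X + C u).eval v = v + u := by simp

lemma lin_not_dvd {u v : F4} (h : u ≠ v) : ¬ (X + C u) ∣ (X + C v) := by
  intro hd
  exact h (lin_inj (Polynomial.eq_of_monic_of_associated (lin_monic u) (lin_monic v)
    ((lin_irr u).associated_of_dvd (lin_irr v) hd)))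

lemma lin_coprime {u v : F4} (h : u ≠ v) : IsCoprime (X + C u) (X + C v) :=
  (lin_irr u).coprime_iff_not_dvd.mpr (lin_not_dvd h)

lemma linpow_coprime {u v : F4} (h : u ≠ v) (i j : ℕ) :
    IsCoprime ((X + C u) ^ i) ((X + C v) ^ j) :=
  (lin_coprime h).pow

lemma div_of_eq_mul {D z w : Polynomial F4} (hD : D ≠ 0) (h : w = D * z) : w / D = z := by
  have h1 : D ∣ w := ⟨z, h⟩
  have h2 : D * (w / D) = w := EuclideanDomain.mul_div_cancel' hD h1
  exact mul_left_cancel₀ hD (h2.trans h)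

lemma quot_ne_zero {D N : Polynomial F4} (hD : D ≠ 0) (h : D ∣ N) (hN : N ≠ 0) : N / D ≠ 0 := by
  intro h0
  have h2 := EuclideanDomain.mul_div_cancel' hD h
  rw [h0, mul_zero] at h2
  exact hN h2.symm

lemma monic_dvd_two {u v : F4} (huv : u ≠ v) {e f : ℕ} {D : Polynomial F4} (hD : D.Monic)
    (h : D ∣ (X + C u) ^ e * (X + C v) ^ f) :
    ∃ i j, i ≤ e ∧ j ≤ f ∧ D = (X + C u) ^ i * (X + C v) ^ j := by
  obtain ⟨d1, d2, h1, h2, rfl⟩ := exists_dvd_and_dvd_of_dvd_mul h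
  obtain ⟨i, hi, hai⟩ := (dvd_prime_pow (lin_prime u) e).mp h1
  obtain ⟨j, hj, haj⟩ := (dvd_prime_pow (lin_prime v) f).mp h2
  refine ⟨i, j, hi, hj, ?_⟩
  exact eq_of_monic_of_associated hD (((lin_monic u).pow _).mul ((lin_monic v).pow _))
    (Associated.mul_mul hai haj)

lemma monic_dvd_four {u1 u2 u3 u4 : F4} {a1 a2 a3 a4 : ℕ} {D : Polynomial F4} (hD : D.Monic)
    (h : D ∣ (X + C u1) ^ a1 * (X + C u2) ^ a2 * (X + C u3) ^ a3 * (X + C u4) ^ a4) :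
    ∃ e1 e2 e3 e4,
      D = (X + C u1) ^ e1 * (X + C u2) ^ e2 * (X + C u3) ^ e3 * (X + C u4) ^ e4 := by
  obtain ⟨t3, d4, h3, hd4, rfl⟩ := exists_dvd_and_dvd_of_dvd_mul h
  obtain ⟨e4, _, ha4⟩ := (dvd_prime_pow (lin_prime u4) a4).mp hd4
  obtain ⟨t2, d3, h2, hd3, rfl⟩ := exists_dvd_and_dvd_of_dvd_mul h3
  obtain ⟨e3, _, ha3⟩ := (dvd_prime_pow (lin_prime u3) a3).mp hd3
  obtain ⟨d1, d2, hd1, hd2, rfl⟩ := exists_dvd_and_dvd_of_dvd_mul h2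
  obtain ⟨e2, _, ha2⟩ := (dvd_prime_pow (lin_prime u2) a2).mp hd2
  obtain ⟨e1, _, ha1⟩ := (dvd_prime_pow (lin_prime u1) a1).mp hd1
  refine ⟨e1, e2, e3, e4, ?_⟩
  refine eq_of_monic_of_associated hD ?_ ?_
  · exact ((((lin_monic u1).pow _).mul ((lin_monic u2).pow _)).mul ((lin_monic u3).pow _)).mul
      ((lin_monic u4).pow _)
  · exact Associated.mul_mul (Associated.mul_mul (Associated.mul_mul ha1 ha2) ha3) ha4

lemma roots_linpow_two (u v : F4) (i j : ℕ) :
    (((X + C u) ^ i * (X + C v) ^ j).roots) = i • {u} + j • {v} := by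
  rw [roots_mul (mul_ne_zero (pow_ne_zero _ (lin_monic u).ne_zero)
      (pow_ne_zero _ (lin_monic v).ne_zero)), roots_pow, roots_pow, lin_roots, lin_roots]

lemma count_nsmul_single {x y : F4} (n : ℕ) :
    ((n • ({x} : Multiset F4)).count y) = n * (if y = x then 1 else 0) := by
  rw [Multiset.count_nsmul, Multiset.count_singleton]

lemma linpow_two_inj {u v : F4} (huv : u ≠ v) {i j i' j' : ℕ}
    (h : (X + C u) ^ i * (X + C v) ^ j = (X + C u) ^ i' * (X + C v) ^ j') :
    i = i' ∧ j = j' := by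
  have hr := congrArg Polynomial.roots h
  rw [roots_linpow_two, roots_linpow_two] at hr
  constructor
  · have := congrArg (Multiset.count u) hr
    simpa [Multiset.count_add, count_nsmul_single, huv, Ne.symm huv] using this
  · have := congrArg (Multiset.count v) hr
    simpa [Multiset.count_add, count_nsmul_single, huv, Ne.symm huv] using this

lemma div_linpow_two (u v : F4) {e f i j : ℕ} (hie : i ≤ e) (hjf : j ≤ f) :
    ((X + C u) ^ e * (X + C v) ^ f) / ((X + C u) ^ i * (X + C v) ^ j) =
      (X + C u) ^ (e - i) * (X + C v) ^ (f - j) := by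
  refine div_of_eq_mul (mul_ne_zero (pow_ne_zero _ (lin_monic u).ne_zero)
    (pow_ne_zero _ (lin_monic v).ne_zero)) ?_
  rw [mul_mul_mul_comm, ← pow_add, ← pow_add, Nat.add_sub_cancel' hie, Nat.add_sub_cancel' hjf]

lemma not_coprime_of_common (u : F4) {s t : Polynomial F4} (hs : (X + C u) ∣ s)
    (ht : (X + C u) ∣ t) : ¬ IsCoprime s t :=
  fun h => (lin_irr u).not_isUnit (h.isUnit_of_dvd' hs ht)

lemma unitary_iff {u v : F4} (huv : u ≠ v) (i j : ℕ) (G : Polynomial F4) :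
    IsUnitaryDivisor G ((X + C u) ^ i * (X + C v) ^ j) ↔
      ∃ i' j', (i' = 0 ∨ i' = i) ∧ (j' = 0 ∨ j' = j) ∧
        G = (X + C u) ^ i' * (X + C v) ^ j' := by
  constructor
  · rintro ⟨hG, hdvd, hcop⟩
    obtain ⟨i', j', hi, hj, rfl⟩ := monic_dvd_two huv hG hdvd
    rw [div_linpow_two u v hi hj] at hcop
    refine ⟨i', j', ?_, ?_, rfl⟩
    · by_contra hc
      push_neg at hc
      refine not_coprime_of_common u ?_ ?_ hcop
      · exact dvd_mul_of_dvd_left (dvd_pow_self _ hc.1) _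
      · exact dvd_mul_of_dvd_left (dvd_pow_self _ (by omega : i - i' ≠ 0)) _
    · by_contra hc
      push_neg at hc
      refine not_coprime_of_common v ?_ ?_ hcop
      · exact dvd_mul_of_dvd_right (dvd_pow_self _ hc.1) _
      · exact dvd_mul_of_dvd_right (dvd_pow_self _ (by omega : j - j' ≠ 0)) _
  · rintro ⟨i', j', hi', hj', rfl⟩
    have hii : i' ≤ i := by omega
    have hjj : j' ≤ j := by omega
    refine ⟨((lin_monic u).pow _).mul ((lin_monic v).pow _),
      mul_dvd_mul (pow_dvd_pow _ hii) (pow_dvd_pow _ hjj), ?_⟩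
    rw [div_linpow_two u v hii hjj]
    rcases hi' with rfl | rfl <;> rcases hj' with rfl | rfl
    · simpa using isCoprime_one_left
    · simp only [pow_zero, one_mul, Nat.sub_zero, Nat.sub_self, mul_one]
      exact linpow_coprime (Ne.symm huv) _ _
    · simp only [pow_zero, mul_one, Nat.sub_zero, Nat.sub_self, one_mul]
      exact linpow_coprime huv _ _
    · simp only [Nat.sub_self, pow_zero, mul_one]
      exact isCoprime_one_right
end S12
namespace S12
open Finset
open scoped Classical

lemma biunitary_iff {u v : F4} (huv : u ≠ v) (e f : ℕ) (D : Polynomial F4) :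
    IsBiunitaryDivisor D ((X + C u) ^ e * (X + C v) ^ f) ↔
      ∃ i j, i ≤ e ∧ j ≤ f ∧ (i = 0 ∨ 2 * i ≠ e) ∧ (j = 0 ∨ 2 * j ≠ f) ∧
        D = (X + C u) ^ i * (X + C v) ^ j := by
  constructor
  · rintro ⟨hD, hdvd, hmin⟩
    obtain ⟨i, j, hi, hj, rfl⟩ := monic_dvd_two huv hD hdvd
    rw [div_linpow_two u v hi hj] at hmin
    refine ⟨i, j, hi, hj, ?_, ?_, rfl⟩
    · by_contra hc
      push_neg at hc
      have h1 : IsUnitaryDivisor ((X + C u) ^ i * (X + C v) ^ 0)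
          ((X + C u) ^ i * (X + C v) ^ j) :=
        (unitary_iff huv i j _).mpr ⟨i, 0, Or.inr rfl, Or.inl rfl, rfl⟩
      have h2 : IsUnitaryDivisor ((X + C u) ^ i * (X + C v) ^ 0)
          ((X + C u) ^ (e - i) * (X + C v) ^ (f - j)) :=
        (unitary_iff huv (e - i) (f - j) _).mpr ⟨i, 0, Or.inr (by omega), Or.inl rfl, rfl⟩
      have h3 := hmin _ h1 h2
      have h4 := congrArg natDegree h3
      rw [pow_zero, mul_one, natDegree_pow, lin_natDegree, natDegree_one] at h4
      omega
    · by_contra hc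
      push_neg at hc
      have h1 : IsUnitaryDivisor ((X + C u) ^ 0 * (X + C v) ^ j)
          ((X + C u) ^ i * (X + C v) ^ j) :=
        (unitary_iff huv i j _).mpr ⟨0, j, Or.inl rfl, Or.inr rfl, rfl⟩
      have h2 : IsUnitaryDivisor ((X + C u) ^ 0 * (X + C v) ^ j)
          ((X + C u) ^ (e - i) * (X + C v) ^ (f - j)) :=
        (unitary_iff huv (e - i) (f - j) _).mpr ⟨0, j, Or.inl rfl, Or.inr (by omega), rfl⟩
      have h3 := hmin _ h1 h2
      have h4 := congrArg natDegree h3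
      rw [pow_zero, one_mul, natDegree_pow, lin_natDegree, natDegree_one] at h4
      omega
  · rintro ⟨i, j, hi, hj, hadm1, hadm2, rfl⟩
    refine ⟨((lin_monic u).pow _).mul ((lin_monic v).pow _),
      mul_dvd_mul (pow_dvd_pow _ hi) (pow_dvd_pow _ hj), ?_⟩
    intro G hG1 hG2
    rw [div_linpow_two u v hi hj] at hG2
    obtain ⟨i1, j1, hi1, hj1, rfl⟩ := (unitary_iff huv i j G).mp hG1
    obtain ⟨i2, j2, hi2, hj2, heq⟩ := (unitary_iff huv (e - i) (f - j) _).mp hG2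
    obtain ⟨hii, hjj⟩ := linpow_two_inj huv heq
    have hz1 : i1 = 0 := by omega
    have hz2 : j1 = 0 := by omega
    rw [hz1, hz2, pow_zero, pow_zero, mul_one]

lemma sigma_two {u v : F4} (huv : u ≠ v) (e f : ℕ) :
    sigmaStarStar ((X + C u) ^ e * (X + C v) ^ f) =
      (∑ i ∈ (range (e + 1)).filter (fun i => i = 0 ∨ 2 * i ≠ e), (X + C u) ^ i) *
      (∑ j ∈ (range (f + 1)).filter (fun j => j = 0 ∨ 2 * j ≠ f), (X + C v) ^ j) := by
  have hset : {D : Polynomial F4 | IsBiunitaryDivisor D ((X + C u) ^ e * (X + C v) ^ f)} =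
      (fun p : ℕ × ℕ => (X + C u) ^ p.1 * (X + C v) ^ p.2) ''
        ↑(((range (e + 1)).filter (fun i => i = 0 ∨ 2 * i ≠ e)) ×ˢ
          ((range (f + 1)).filter (fun j => j = 0 ∨ 2 * j ≠ f))) := by
    ext D
    simp only [Set.mem_setOf_eq, biunitary_iff huv, Set.mem_image, Finset.mem_coe,
      Finset.mem_product, Finset.mem_filter, Finset.mem_range, Prod.exists]
    constructor
    · rintro ⟨i, j, h1, h2, h3, h4, rfl⟩
      exact ⟨i, j, ⟨⟨by omega, h3⟩, by omega, h4⟩, rfl⟩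
    · rintro ⟨i, j, ⟨⟨h1, h3⟩, h2, h4⟩, rfl⟩
      exact ⟨i, j, by omega, by omega, h3, h4, rfl⟩
  have hinj : Set.InjOn (fun p : ℕ × ℕ => (X + C u) ^ p.1 * (X + C v) ^ p.2)
      ↑(((range (e + 1)).filter (fun i => i = 0 ∨ 2 * i ≠ e)) ×ˢ
        ((range (f + 1)).filter (fun j => j = 0 ∨ 2 * j ≠ f))) := by
    rintro ⟨i, j⟩ - ⟨i', j'⟩ - h
    obtain ⟨h1, h2⟩ := linpow_two_inj huv h
    simp only [Prod.mk.injEq]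
    exact ⟨h1, h2⟩
  simp only [sigmaStarStar]
  rw [hset, finsum_mem_image hinj, finsum_mem_coe_finset, Finset.sum_mul_sum]
  rw [Finset.sum_product]

lemma dvd_unit_mul_iff {l : F4} (hl : l ≠ 0) (a N : Polynomial F4) : a ∣ C l * N ↔ a ∣ N := by
  constructor
  · intro h
    have h2 : C l⁻¹ * (C l * N) = N := by
      rw [← mul_assoc, ← C_mul, inv_mul_cancel₀ hl, C_1, one_mul]
    exact h2 ▸ h.mul_left (C l⁻¹)
  · exact fun h => h.mul_left (C l)

lemma div_unit_mul {l : F4} (hl : l ≠ 0) {D N : Polynomial F4} (hD : D ≠ 0) (h : D ∣ N) :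
    (C l * N) / D = C l * (N / D) := by
  refine div_of_eq_mul hD ?_
  have h2 := EuclideanDomain.mul_div_cancel' hD h
  calc C l * N = C l * (D * (N / D)) := by rw [h2]
    _ = D * (C l * (N / D)) := by ring

lemma coprime_C {l : F4} (hl : l ≠ 0) (a : Polynomial F4) : IsCoprime a (C l) :=
  ⟨0, C l⁻¹, by rw [zero_mul, zero_add, ← C_mul, inv_mul_cancel₀ hl, C_1]⟩

lemma coprime_unit_mul_iff {l : F4} (hl : l ≠ 0) (a N : Polynomial F4) :
    IsCoprime a (C l * N) ↔ IsCoprime a N := by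
  constructor
  · exact fun h => h.of_mul_right_right
  · exact fun h => IsCoprime.mul_right (coprime_C hl a) h

lemma unitary_unit_iff {l : F4} (hl : l ≠ 0) {N : Polynomial F4} (G : Polynomial F4) :
    IsUnitaryDivisor G (C l * N) ↔ IsUnitaryDivisor G N := by
  constructor
  · rintro ⟨h1, h2, h3⟩
    have h2' : G ∣ N := (dvd_unit_mul_iff hl G N).mp h2
    rw [div_unit_mul hl h1.ne_zero h2'] at h3
    exact ⟨h1, h2', (coprime_unit_mul_iff hl _ _).mp h3⟩
  · rintro ⟨h1, h2, h3⟩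
    refine ⟨h1, (dvd_unit_mul_iff hl G N).mpr h2, ?_⟩
    rw [div_unit_mul hl h1.ne_zero h2]
    exact (coprime_unit_mul_iff hl _ _).mpr h3

lemma biunitary_unit_iff {l : F4} (hl : l ≠ 0) {N : Polynomial F4} (D : Polynomial F4) :
    IsBiunitaryDivisor D (C l * N) ↔ IsBiunitaryDivisor D N := by
  constructor
  · rintro ⟨h1, h2, h3⟩
    have h2' : D ∣ N := (dvd_unit_mul_iff hl D N).mp h2
    refine ⟨h1, h2', ?_⟩
    intro G hG1 hG2
    refine h3 G hG1 ?_
    rw [div_unit_mul hl h1.ne_zero h2']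
    exact (unitary_unit_iff hl G).mpr hG2
  · rintro ⟨h1, h2', h3⟩
    refine ⟨h1, (dvd_unit_mul_iff hl D N).mpr h2', ?_⟩
    intro G hG1 hG2
    rw [div_unit_mul hl h1.ne_zero h2'] at hG2
    exact h3 G hG1 ((unitary_unit_iff hl G).mp hG2)

lemma sigma_unit {l : F4} (hl : l ≠ 0) (N : Polynomial F4) :
    sigmaStarStar (C l * N) = sigmaStarStar N := by
  simp only [sigmaStarStar]
  have hset : {D : Polynomial F4 | IsBiunitaryDivisor D (C l * N)} =
      {D : Polynomial F4 | IsBiunitaryDivisor D N} :=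
    Set.ext fun D => biunitary_unit_iff hl D
  rw [hset]

end S12
namespace S12
open Finset
open scoped Classical

lemma linpow_degree (u : F4) (i : ℕ) : ((X + C u) ^ i).degree = (i : WithBot ℕ) := by
  rw [degree_eq_natDegree (pow_ne_zero _ (lin_ne_zero u)), natDegree_pow, lin_natDegree, mul_one]

lemma sum_linpow_monic (u : F4) (e : ℕ) :
    (∑ i ∈ (range (e + 1)).filter (fun i => i = 0 ∨ 2 * i ≠ e), (X + C u) ^ i).Monic ∧
    (∑ i ∈ (range (e + 1)).filter (fun i => i = 0 ∨ 2 * i ≠ e), (X + C u) ^ i).natDegree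
      = e := by
  set s := (range (e + 1)).filter (fun i => i = 0 ∨ 2 * i ≠ e) with hs
  have hes : e ∈ s := by
    rw [hs]; simp only [mem_filter, mem_range]; omega
  have hsum : ∑ i ∈ s, (X + C u) ^ i = (X + C u) ^ e + ∑ i ∈ s.erase e, (X + C u) ^ i :=
    (Finset.add_sum_erase s _ hes).symm
  have hlt : (∑ i ∈ s.erase e, (X + C u) ^ i).degree < ((X + C u) ^ e).degree := by
    rw [linpow_degree]
    refine lt_of_le_of_lt (degree_sum_le _ _) ?_
    refine (Finset.sup_lt_iff (WithBot.bot_lt_coe e)).mpr ?_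
    intro b hb
    have hb' : b < e := by
      have h1 := Finset.mem_erase.mp hb
      have h2 := Finset.mem_filter.mp h1.2
      have := Finset.mem_range.mp h2.1
      omega
    rw [linpow_degree]
    exact WithBot.coe_lt_coe.mpr hb'
  constructor
  · rw [hsum]
    exact ((lin_monic u).pow e).add_of_left hlt
  · rw [hsum]
    have hdeg : ((X + C u) ^ e + ∑ i ∈ s.erase e, (X + C u) ^ i).degree = (e : WithBot ℕ) := by
      rw [degree_add_eq_left_of_degree_lt hlt, linpow_degree]
    exact natDegree_eq_of_degree_eq_some hdeg

lemma xp1_ne_zero {m : ℕ} (hm : m ≠ 0) : ((X : Polynomial F4) ^ m + 1) ≠ 0 := by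
  have := monic_X_pow_add_C (1 : F4) hm
  rw [C_1] at this
  exact this.ne_zero

lemma CX {m : ℕ} (hm : Odd m) : ((X : Polynomial F4) ^ m + 1).roots.count 1 = 1 := by
  have hm1 : m ≠ 0 := by rintro rfl; simp [Nat.odd_iff] at hm
  have hne := xp1_ne_zero hm1
  have hder : derivative ((X : Polynomial F4) ^ m + 1) = X ^ (m - 1) := by
    rw [derivative_add, derivative_one, add_zero, derivative_X_pow]
    have hcast : ((m : ℕ) : F4) = 1 := by
      obtain ⟨k, hk⟩ := hm
      subst hk
      push_cast
      rw [twoF]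
      ring
    rw [hcast, C_1, one_mul]
  have hsep : ((X : Polynomial F4) ^ m + 1).Separable := by
    rw [Polynomial.Separable, hder]
    refine ⟨1, X, ?_⟩
    have hxm : (X : Polynomial F4) * X ^ (m - 1) = X ^ m := by
      calc (X : Polynomial F4) * X ^ (m - 1) = X ^ (m - 1) * X := mul_comm _ _
        _ = X ^ (m - 1 + 1) := (pow_succ _ _).symm
        _ = X ^ m := by rw [Nat.sub_add_cancel hm.pos]
    rw [one_mul, hxm]
    linear_combination (X : Polynomial F4) ^ m * twoR
  have hnodup := Polynomial.nodup_roots hsep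
  have hroot : (1 : F4) ∈ ((X : Polynomial F4) ^ m + 1).roots := by
    rw [mem_roots hne]
    show ((X : Polynomial F4) ^ m + 1).eval 1 = 0
    rw [eval_add, eval_pow, eval_X, eval_one, one_pow]
    calc (1 : F4) + 1 = 2 := by ring
      _ = 0 := twoF
  have h1 := Multiset.one_le_count_iff_mem.mpr hroot
  have h2 := Multiset.nodup_iff_count_le_one.mp hnodup (1 : F4)
  omega

lemma xpow_pow_add_one (m s : ℕ) :
    ((X : Polynomial F4) ^ m + 1) ^ 2 ^ s = X ^ (2 ^ s * m) + 1 := by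
  haveI : Fact (Nat.Prime 2) := ⟨Nat.prime_two⟩
  rw [add_pow_char_pow, one_pow, ← pow_mul, mul_comm m (2 ^ s)]

lemma count_lin_rhs (c : F4) (e : ℕ) (w : F4) :
    (((X + C c) ^ e * (X + 1) : Polynomial F4).roots).count w
      = e * (if w = c then 1 else 0) + (if w = 1 then 1 else 0) := by
  have h1 : ((X : Polynomial F4) + 1) = X + C 1 := by rw [C_1]
  rw [h1, roots_mul (mul_ne_zero (pow_ne_zero _ (lin_ne_zero c)) (lin_ne_zero 1)), roots_pow,
    lin_roots, lin_roots, Multiset.count_add, count_nsmul_single, Multiset.count_singleton]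

lemma count_one_pow_lhs {m : ℕ} (hm : Odd m) (s : ℕ) :
    ((((X : Polynomial F4) ^ m + 1) ^ 2 ^ s).roots).count 1 = 2 ^ s := by
  rw [roots_pow, Multiset.count_nsmul, CX hm, mul_one]


lemma two_adic {k : ℕ} (hk : k ≠ 0) : ∃ s m, 2 ^ s * m = k ∧ Odd m := by
  refine ⟨k.factorization 2, k / 2 ^ k.factorization 2,
    Nat.ordProj_mul_ordCompl_eq_self k 2, ?_⟩
  have h2 := Nat.not_dvd_ordCompl Nat.prime_two hk
  rw [Nat.odd_iff]
  omega

lemma AL {c : F4} (hc : c ≠ 0) {e : ℕ} (he : 1 ≤ e)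
    (h : (∑ i ∈ (range (e + 1)).filter (fun i => i = 0 ∨ 2 * i ≠ e), (X : Polynomial F4) ^ i)
        = (X + C c) ^ e) :
    c = 1 ∧ e ∈ TSet := by
  rcases Nat.even_or_odd e with he2 | he2
  · -- even case : e = k + k, k ≥ 1
    obtain ⟨k, hk⟩ := he2
    subst hk
    have hk1 : 1 ≤ k := by omega
    have hfe : (range (k + k + 1)).filter (fun i => i = 0 ∨ 2 * i ≠ k + k)
        = (range (k + k + 1)).erase k := by
      ext i
      simp only [mem_filter, mem_range, mem_erase]
      omega
    rw [hfe] at h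
    have hsum : (X + C c) ^ (k + k)
        = (∑ i ∈ range (k + k + 1), (X : Polynomial F4) ^ i) - X ^ k := by
      rw [← h]
      exact eq_sub_of_add_eq (Finset.sum_erase_add _ _ (by simp only [mem_range]; omega))
    have hG := geom_sum_mul (X : Polynomial F4) (k + k + 1)
    have key : ((X : Polynomial F4) ^ k + 1) * (X ^ (k + 1) + 1)
        = (X + C c) ^ (k + k) * (X + 1) := by
      linear_combination (-(X + 1 : Polynomial F4)) * hsum + hG +
        ((X : Polynomial F4) ^ (k + k + 1) + X ^ (k + 1) + X ^ k
          - (∑ i ∈ range (k + k + 1), (X : Polynomial F4) ^ i) * X) * twoR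
    -- decompose k and k+1
    have hk0 : k ≠ 0 := by omega
    obtain ⟨s, m, hms, hmodd⟩ := two_adic hk0
    obtain ⟨t, m', hms', hmodd'⟩ := two_adic (by omega : k + 1 ≠ 0)
    have key2 : (((X : Polynomial F4) ^ m + 1) ^ 2 ^ s) * (((X : Polynomial F4) ^ m' + 1) ^ 2 ^ t)
        = (X + C c) ^ (k + k) * (X + 1) := by
      rw [xpow_pow_add_one, xpow_pow_add_one, hms, hms']
      exact key
    have hcount := congrArg (fun M : Multiset F4 => M.count 1) (congrArg Polynomial.roots key2)
    rw [roots_mul (mul_ne_zero (pow_ne_zero _ (xp1_ne_zero (by rintro rfl; simp [Nat.odd_iff] at hmodd)))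
        (pow_ne_zero _ (xp1_ne_zero (by rintro rfl; simp [Nat.odd_iff] at hmodd'))))] at hcount
    simp only [Multiset.count_add] at hcount
    rw [count_one_pow_lhs hmodd, count_one_pow_lhs hmodd', count_lin_rhs] at hcount
    -- hcount : 2^s + 2^t = (k+k) * (if 1 = c ...) + 1
    have hc1 : c = 1 := by
      by_contra hcc
      rw [if_neg (fun hh : (1 : F4) = c => hcc hh.symm), if_pos rfl] at hcount
      have := Nat.one_le_two_pow (n := s)
      have := Nat.one_le_two_pow (n := t)
      omega
    subst hc1
    rw [if_pos rfl] at hcount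
    -- bounds
    have hmpos : 0 < m := hmodd.pos
    have hmpos' : 0 < m' := hmodd'.pos
    have hb1 : 2 ^ s ≤ k := by
      calc 2 ^ s = 2 ^ s * 1 := (mul_one _).symm
        _ ≤ 2 ^ s * m := Nat.mul_le_mul_left _ hmpos
        _ = k := hms
    have hb2 : 2 ^ t ≤ k + 1 := by
      calc 2 ^ t = 2 ^ t * 1 := (mul_one _).symm
        _ ≤ 2 ^ t * m' := Nat.mul_le_mul_left _ hmpos'
        _ = k + 1 := hms'
    have heq1 : 2 ^ s = k ∧ 2 ^ t = k + 1 := by omega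
    have ht1 : t ≠ 0 := by
      rintro h0
      rw [h0, pow_zero] at heq1
      omega
    have hs0 : s = 0 := by
      rcases Nat.eq_zero_or_pos s with h0 | h0
      · exact h0
      · exfalso
        have hd1 : 2 ∣ 2 ^ s := dvd_pow_self 2 (by omega)
        have hd2 : 2 ∣ 2 ^ t := dvd_pow_self 2 ht1
        omega
    have hke : k = 1 := by rw [hs0, pow_zero] at heq1; omega
    subst hke
    exact ⟨rfl, ⟨by omega, Or.inl rfl⟩⟩
  · -- odd case
    have hfe : (range (e + 1)).filter (fun i => i = 0 ∨ 2 * i ≠ e) = range (e + 1) := by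
      obtain ⟨j, hj⟩ := he2
      ext i
      simp only [mem_filter, mem_range]
      omega
    rw [hfe] at h
    have hG := geom_sum_mul (X : Polynomial F4) (e + 1)
    rw [h] at hG
    have key : (X : Polynomial F4) ^ (e + 1) + 1 = (X + C c) ^ e * (X + 1) := by
      linear_combination (-1 : Polynomial F4) * hG + (1 - (X + C c) ^ e) * twoR
    obtain ⟨s, m, hms, hmodd⟩ := two_adic (by omega : e + 1 ≠ 0)
    have hspos : 0 < s := by
      rcases Nat.eq_zero_or_pos s with h0 | h0
      · exfalso
        rw [Nat.odd_iff] at hmodd he2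
        rw [h0, pow_zero, one_mul] at hms
        omega
      · exact h0
    have key2 : (((X : Polynomial F4) ^ m + 1) ^ 2 ^ s) = (X + C c) ^ e * (X + 1) := by
      rw [xpow_pow_add_one, hms]
      exact key
    have hcount := congrArg (fun M : Multiset F4 => M.count 1) (congrArg Polynomial.roots key2)
    rw [count_one_pow_lhs hmodd, count_lin_rhs] at hcount
    have hc1 : c = 1 := by
      by_contra hcc
      rw [if_neg (fun hh : (1 : F4) = c => hcc hh.symm), if_pos rfl] at hcount
      have h2s : 2 ≤ 2 ^ s := by
        calc 2 = 2 ^ 1 := (pow_one 2).symm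
        _ ≤ 2 ^ s := Nat.pow_le_pow_right (by omega) hspos
      omega
    subst hc1
    rw [if_pos rfl] at hcount
    have hs1 : 1 ≤ s := by
      rcases Nat.eq_zero_or_pos s with h0 | h0
      · rw [h0, pow_zero] at hcount; omega
      · omega
    exact ⟨rfl, ⟨by omega, Or.inr ⟨s, hs1, by omega⟩⟩⟩

end S12
namespace S12
open Finset
open scoped Classical

lemma MCL {u v : F4} (huv : u ≠ v) {l : F4} (hl : l ≠ 0) {e f : ℕ} (hef : 1 ≤ e + f)
    (h : IsBUP (C l * ((X + C u) ^ e * (X + C v) ^ f))) :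
    e = f ∧ u + v = 1 ∧ e ∈ TSet := by
  have hIs : sigmaStarStar (C l * ((X + C u) ^ e * (X + C v) ^ f))
      = C l * ((X + C u) ^ e * (X + C v) ^ f) := h
  rw [sigma_unit hl, sigma_two huv] at hIs
  set S1 := ∑ i ∈ (range (e + 1)).filter (fun i => i = 0 ∨ 2 * i ≠ e), (X + C u) ^ i with hS1
  set S2 := ∑ j ∈ (range (f + 1)).filter (fun j => j = 0 ∨ 2 * j ≠ f), (X + C v) ^ j with hS2
  have hzmem : ∀ (g : ℕ), 0 ∈ (range (g + 1)).filter (fun i => i = 0 ∨ 2 * i ≠ g) := by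
    intro g
    rw [mem_filter, mem_range]
    exact ⟨by omega, Or.inl rfl⟩
  have heval1 : S1.eval u = 1 := by
    rw [hS1, eval_finset_sum, Finset.sum_eq_single_of_mem 0 (hzmem e)]
    · simp
    · intro b _ hb0
      rw [eval_pow, lin_eval, CharTwo.add_self_eq_zero]
      exact zero_pow hb0
  have heval2 : S2.eval v = 1 := by
    rw [hS2, eval_finset_sum, Finset.sum_eq_single_of_mem 0 (hzmem f)]
    · simp
    · intro b _ hb0
      rw [eval_pow, lin_eval, CharTwo.add_self_eq_zero]
      exact zero_pow hb0
  by_cases hf0 : f = 0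
  · exfalso
    subst hf0
    have hS2one : S2 = 1 := by
      rw [hS2]
      have hfil : (range 1).filter (fun j => j = 0 ∨ 2 * j ≠ 0) = {0} := by
        ext i
        simp only [mem_filter, mem_range, Finset.mem_singleton]
        omega
      rw [hfil, Finset.sum_singleton, pow_zero]
    have hev := congrArg (Polynomial.eval u) hIs
    rw [hS2one] at hev
    simp only [eval_mul, eval_one, mul_one, one_mul, eval_C, eval_pow, lin_eval,
      CharTwo.add_self_eq_zero, heval1, zero_pow (by omega : e ≠ 0), pow_zero,
      mul_zero, zero_mul] at hev
    exact one_ne_zero hev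
  by_cases he0 : e = 0
  · exfalso
    subst he0
    have hS1one : S1 = 1 := by
      rw [hS1]
      have hfil : (range 1).filter (fun j => j = 0 ∨ 2 * j ≠ 0) = {0} := by
        ext i
        simp only [mem_filter, mem_range, Finset.mem_singleton]
        omega
      rw [hfil, Finset.sum_singleton, pow_zero]
    have hev := congrArg (Polynomial.eval v) hIs
    rw [hS1one] at hev
    simp only [eval_mul, eval_one, mul_one, one_mul, eval_C, eval_pow, lin_eval,
      CharTwo.add_self_eq_zero, heval2, zero_pow hf0, pow_zero, mul_zero, zero_mul] at hev
    exact one_ne_zero hev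
  -- main case
  have hPS1 : ¬ (X + C u) ∣ S1 := by
    rintro ⟨t, ht⟩
    have hev := congrArg (Polynomial.eval u) ht
    rw [heval1, eval_mul, lin_eval, CharTwo.add_self_eq_zero, zero_mul] at hev
    exact one_ne_zero hev
  have hQS2 : ¬ (X + C v) ∣ S2 := by
    rintro ⟨t, ht⟩
    have hev := congrArg (Polynomial.eval v) ht
    rw [heval2, eval_mul, lin_eval, CharTwo.add_self_eq_zero, zero_mul] at hev
    exact one_ne_zero hev
  have hcop1 : IsCoprime S1 ((X + C u) ^ e) :=
    (((lin_irr u).coprime_iff_not_dvd.mpr hPS1).symm).pow_right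
  have hcop2 : IsCoprime S2 ((X + C v) ^ f) :=
    (((lin_irr v).coprime_iff_not_dvd.mpr hQS2).symm).pow_right
  have hdvd1 : S1 ∣ (X + C u) ^ e * (C l * (X + C v) ^ f) := ⟨S2, by rw [hIs]; ring⟩
  have hdvd1'' : S1 ∣ (X + C v) ^ f :=
    (dvd_unit_mul_iff hl _ _).mp (hcop1.dvd_of_dvd_mul_left hdvd1)
  obtain ⟨j, hjf, hassoc1⟩ := (dvd_prime_pow (lin_prime v) f).mp hdvd1''
  have hS1eq : S1 = (X + C v) ^ j :=
    eq_of_monic_of_associated (sum_linpow_monic u e).1 ((lin_monic v).pow _) hassoc1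
  have hje : j = e := by
    have hnd := congrArg natDegree hS1eq
    rw [(sum_linpow_monic u e).2, natDegree_pow, lin_natDegree, mul_one] at hnd
    omega
  rw [hje] at hS1eq hjf
  have hdvd2 : S2 ∣ (X + C v) ^ f * (C l * (X + C u) ^ e) :=
    ⟨S1, by rw [mul_comm S2 S1, hIs]; ring⟩
  have hdvd2'' : S2 ∣ (X + C u) ^ e :=
    (dvd_unit_mul_iff hl _ _).mp (hcop2.dvd_of_dvd_mul_left hdvd2)
  obtain ⟨i, hif, hassoc2⟩ := (dvd_prime_pow (lin_prime u) e).mp hdvd2''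
  have hS2eq : S2 = (X + C u) ^ i :=
    eq_of_monic_of_associated (sum_linpow_monic v f).1 ((lin_monic u).pow _) hassoc2
  have hfi : i = f := by
    have hnd := congrArg natDegree hS2eq
    rw [(sum_linpow_monic v f).2, natDegree_pow, lin_natDegree, mul_one] at hnd
    omega
  rw [hfi] at hif
  have hef2 : e = f := le_antisymm hjf hif
  subst hef2
  -- transport through the substitution X ↦ X + C u
  have hPX : aeval ((X : Polynomial F4) + C u) ((X : Polynomial F4) + C u) = X := by
    rw [map_add, aeval_X, aeval_C, Polynomial.algebraMap_eq, add_assoc, ← C_add,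
      CharTwo.add_self_eq_zero, C_0, add_zero]
  have hQv : aeval ((X : Polynomial F4) + C u) ((X : Polynomial F4) + C v)
      = X + C (u + v) := by
    rw [map_add, aeval_X, aeval_C, Polynomial.algebraMap_eq, add_assoc, ← C_add]
  have htrans : (∑ i ∈ (range (e + 1)).filter (fun i => i = 0 ∨ 2 * i ≠ e),
      (X : Polynomial F4) ^ i) = (X + C (u + v)) ^ e := by
    have hm := congrArg (fun p => aeval ((X : Polynomial F4) + C u) p) hS1eq
    simp only [hS1] at hm
    rw [map_sum] at hm
    simp only [map_pow, hPX, hQv] at hm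
    exact hm
  have hcne : u + v ≠ 0 := by
    intro h0
    apply huv
    have h1 : u + (u + v) = u + 0 := by rw [h0]
    rw [← add_assoc, CharTwo.add_self_eq_zero, zero_add, add_zero] at h1
    exact h1.symm
  obtain ⟨hc1, hTe⟩ := AL hcne (by omega : 1 ≤ e) htrans
  exact ⟨rfl, hc1, hTe⟩
end S12
namespace S12
open Finset
open scoped Classical

lemma roots_four (u0 u1 u2 u3 : F4) (a b c d : ℕ) :
    (((X + C u0) ^ a * (X + C u1) ^ b * (X + C u2) ^ c * (X + C u3) ^ d).roots)
      = a • {u0} + b • {u1} + c • {u2} + d • {u3} := by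
  have n0 : ((X + C u0) ^ a : Polynomial F4) ≠ 0 := pow_ne_zero _ (lin_ne_zero u0)
  have n1 : ((X + C u1) ^ b : Polynomial F4) ≠ 0 := pow_ne_zero _ (lin_ne_zero u1)
  have n2 : ((X + C u2) ^ c : Polynomial F4) ≠ 0 := pow_ne_zero _ (lin_ne_zero u2)
  have n3 : ((X + C u3) ^ d : Polynomial F4) ≠ 0 := pow_ne_zero _ (lin_ne_zero u3)
  rw [roots_mul (mul_ne_zero (mul_ne_zero (mul_ne_zero n0 n1) n2) n3),
    roots_mul (mul_ne_zero (mul_ne_zero n0 n1) n2), roots_mul (mul_ne_zero n0 n1),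
    roots_pow, roots_pow, roots_pow, roots_pow, lin_roots, lin_roots, lin_roots, lin_roots]

lemma exponents_match {u0 u1 u2 u3 : F4}
    (h01 : u0 ≠ u1) (h02 : u0 ≠ u2) (h03 : u0 ≠ u3)
    (h12 : u1 ≠ u2) (h13 : u1 ≠ u3) (h23 : u2 ≠ u3)
    {a b c d g h : ℕ} {t : F4} (ht : t ≠ 0)
    (heq : (X + C u0) ^ a * (X + C u1) ^ b * (X + C u2) ^ c * (X + C u3) ^ d
      = C t * ((X + C u0) ^ g * (X + C u1) ^ g * (X + C u2) ^ h * (X + C u3) ^ h)) :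
    a = g ∧ b = g ∧ c = h ∧ d = h := by
  have hr := congrArg Polynomial.roots heq
  have hM : ((X + C u0) ^ g * (X + C u1) ^ g * (X + C u2) ^ h * (X + C u3) ^ h
      : Polynomial F4) ≠ 0 := by
    refine mul_ne_zero (mul_ne_zero (mul_ne_zero ?_ ?_) ?_) ?_ <;>
      exact pow_ne_zero _ (lin_ne_zero _)
  rw [roots_four, roots_mul (mul_ne_zero (fun hC => ht (by simpa using congrArg (fun p => p.coeff 0) hC)) hM),
    roots_C, zero_add, roots_four] at hr
  refine ⟨?_, ?_, ?_, ?_⟩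
  · have := congrArg (Multiset.count u0) hr
    simpa [Multiset.count_add, count_nsmul_single, h01, h02, h03, Ne.symm h01, Ne.symm h02,
      Ne.symm h03] using this
  · have := congrArg (Multiset.count u1) hr
    simpa [Multiset.count_add, count_nsmul_single, h01, h12, h13, Ne.symm h01, Ne.symm h12,
      Ne.symm h13] using this
  · have := congrArg (Multiset.count u2) hr
    simpa [Multiset.count_add, count_nsmul_single, h02, h12, h23, Ne.symm h02, Ne.symm h12,
      Ne.symm h23] using this
  · have := congrArg (Multiset.count u3) hr
    simpa [Multiset.count_add, count_nsmul_single, h03, h13, h23, Ne.symm h03, Ne.symm h13,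
      Ne.symm h23] using this

end S12
theorem stmt12 (α : F4) (hα : α ^ 2 + α + 1 = 0) (a b c d : ℕ)
    (A : Polynomial F4)
    (hA : A = X ^ a * (X + 1) ^ b * (X + C α) ^ c * (X + C α + 1) ^ d)
    (htriv : IsTriviallyBUP A) (hω : 3 ≤ omegaCount A) :
    omegaCount A = 4 ∧ a ∈ TSet ∧ b ∈ TSet ∧ c ∈ TSet ∧ d ∈ TSet ∧ a = b ∧ c = d ∧
      ∃ A₁ ∈ SigmaSet, ∃ A₂ ∈ SigmaSet, A = A₁ * A₂ := by
  classical
  obtain ⟨hbup, r, B, hr, hprod, hcomp, hcop⟩ := htriv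
  have twoF : (2 : F4) = 0 := S12.twoF
  have twoR : (2 : Polynomial F4) = 0 := S12.twoR
  have hα0 : α ≠ 0 := by rintro rfl; simp at hα
  have hα1 : α ≠ 1 := by
    rintro rfl
    rw [one_pow] at hα
    exact one_ne_zero (by linear_combination hα - twoF : (1 : F4) = 0)
  set u : Fin 4 → F4 := ![0, 1, α, α + 1] with hu
  have hm0 : u ⟨0, by omega⟩ = 0 := rfl
  have hm1 : u ⟨1, by omega⟩ = 1 := rfl
  have hm2 : u ⟨2, by omega⟩ = α := rfl
  have hm3 : u ⟨3, by omega⟩ = α + 1 := rfl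
  have hl0 : u 0 = 0 := rfl
  have hl1 : u 1 = 1 := rfl
  have hl2 : u 2 = α := rfl
  have hl3 : u 3 = α + 1 := rfl
  have hund : ∀ k k' : Fin 4, k ≠ k' → u k ≠ u k' := by
    intro k k' hne heq
    fin_cases k <;> fin_cases k' <;>
      simp only [hm0, hm1, hm2, hm3] at heq hne <;>
      first
        | exact hne rfl
        | exact hα0 (by linear_combination heq)
        | exact hα0 (by linear_combination -heq)
        | exact hα1 (by linear_combination heq)
        | exact hα1 (by linear_combination -heq)
        | exact hα1 (by linear_combination heq - twoF)
        | exact hα1 (by linear_combination -heq - twoF)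
        | exact hα0 (by linear_combination heq - twoF)
        | exact hα0 (by linear_combination -heq - twoF)
        | exact one_ne_zero (by linear_combination heq)
        | exact one_ne_zero (by linear_combination -heq)
  have hpair : ∀ k k' : Fin 4, k ≠ k' → u k + u k' = 1 →
      ({k, k'} : Finset (Fin 4)) = {0, 1} ∨ ({k, k'} : Finset (Fin 4)) = {2, 3} := by
    intro k k' hne hsum
    fin_cases k <;> fin_cases k' <;>
      simp only [hm0, hm1, hm2, hm3] at hsum hne <;>
      first
        | exact absurd rfl hne
        | (left; decide)
        | (right; decide)
        | exact absurd (by linear_combination hsum) hα0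
        | exact absurd (by linear_combination hsum - twoF) hα0
        | exact absurd (by linear_combination hsum) hα1
        | exact absurd (by linear_combination hsum - twoF) hα1
        | exact absurd (by linear_combination hsum) one_ne_zero
        | exact absurd (by linear_combination hsum - twoF) one_ne_zero
  -- rewrite A in canonical form
  have hA' : A = (X + C (u 0)) ^ a * (X + C (u 1)) ^ b * (X + C (u 2)) ^ c
      * (X + C (u 3)) ^ d := by
    rw [hA, hl0, hl1, hl2, hl3, C_0, add_zero, C_1, C_add, C_1, ← add_assoc]
  have hAne : A ≠ 0 := by
    rw [hA']
    exact ((((S12.lin_monic _).pow _).mul ((S12.lin_monic _).pow _)).mul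
      ((S12.lin_monic _).pow _) |>.mul ((S12.lin_monic _).pow _)).ne_zero
  have hBdvdA : ∀ i, B i ∣ A := by
    intro i
    rw [hprod]
    exact Finset.dvd_prod_of_mem B (Finset.mem_univ i)
  have hBne : ∀ i, B i ≠ 0 := fun i => ne_zero_of_dvd_ne_zero hAne (hBdvdA i)
  -- decomposition of each component
  have hdecomp : ∀ i, ∃ (t : F4) (E : Fin 4 → ℕ), t ≠ 0 ∧
      B i = C t * ((X + C (u 0)) ^ (E 0) * (X + C (u 1)) ^ (E 1) * (X + C (u 2)) ^ (E 2)
        * (X + C (u 3)) ^ (E 3)) := by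
    intro i
    have hlne : (B i).leadingCoeff ≠ 0 := leadingCoeff_ne_zero.mpr (hBne i)
    have hM : (B i * C (B i).leadingCoeff⁻¹).Monic := monic_mul_leadingCoeff_inv (hBne i)
    have hMdvd : B i * C (B i).leadingCoeff⁻¹ ∣ A := by
      refine dvd_trans ⟨C (B i).leadingCoeff, ?_⟩ (hBdvdA i)
      rw [mul_assoc, ← C_mul, inv_mul_cancel₀ hlne, C_1, mul_one]
    rw [hA'] at hMdvd
    obtain ⟨e1, e2, e3, e4, hMeq⟩ := S12.monic_dvd_four hM hMdvd
    refine ⟨(B i).leadingCoeff, ![e1, e2, e3, e4], hlne, ?_⟩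
    show B i = C (B i).leadingCoeff * ((X + C (u 0)) ^ e1 * (X + C (u 1)) ^ e2
      * (X + C (u 2)) ^ e3 * (X + C (u 3)) ^ e4)
    rw [← hMeq, mul_comm (C (B i).leadingCoeff), mul_assoc, ← C_mul,
      inv_mul_cancel₀ hlne, C_1, mul_one]
  choose t E ht hBeq using hdecomp
  -- each component has a nonzero exponent
  have hEpos : ∀ i, ∃ k : Fin 4, E i k ≠ 0 := by
    intro i
    by_contra hno
    push_neg at hno
    have hBC : B i = C (t i) := by
      rw [hBeq i, hno 0, hno 1, hno 2, hno 3]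
      simp
    exact (hcomp i).2 (hBC ▸ isUnit_C.mpr (isUnit_iff_ne_zero.mpr (ht i)))
  -- disjoint supports
  have hdisj : ∀ (i j : Fin (r + 1)) (k : Fin 4), i ≠ j → E i k ≠ 0 → E j k ≠ 0 → False := by
    intro i j k hij hi hj
    have hdvd : ∀ (i' : Fin (r + 1)), E i' k ≠ 0 → (X + C (u k)) ∣ B i' := by
      intro i' hi'
      rw [hBeq i']
      refine Dvd.dvd.mul_left ?_ _
      fin_cases k
      · exact dvd_mul_of_dvd_left (dvd_mul_of_dvd_left
          (dvd_mul_of_dvd_left (dvd_pow_self _ hi') _) _) _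
      · exact dvd_mul_of_dvd_left (dvd_mul_of_dvd_left
          (dvd_mul_of_dvd_right (dvd_pow_self _ hi') _) _) _
      · exact dvd_mul_of_dvd_left (dvd_mul_of_dvd_right (dvd_pow_self _ hi') _) _
      · exact dvd_mul_of_dvd_right (dvd_pow_self _ hi') _
    exact (S12.lin_irr (u k)).not_isUnit
      ((hcop i j hij).isUnit_of_dvd' (hdvd i hi) (hdvd j hj))
  -- each component has at least two prime factors
  have htwo : ∀ i, ∃ k k' : Fin 4, k ≠ k' ∧ E i k ≠ 0 ∧ E i k' ≠ 0 := by
    intro i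
    obtain ⟨k, hk⟩ := hEpos i
    by_contra hno
    push_neg at hno
    have hzero : ∀ k' : Fin 4, k' ≠ k → E i k' = 0 := by
      intro k' hkk
      exact hno k k' (Ne.symm hkk) hk
    have hbupB := (hcomp i).1
    rw [hBeq i] at hbupB
    fin_cases k
    · have hk' : E i 0 ≠ 0 := hk
      rw [hzero 1 (by decide), hzero 2 (by decide), hzero 3 (by decide)] at hbupB
      have hshape : C (t i) * ((X + C (u 0)) ^ (E i 0) * (X + C (u 1)) ^ 0
          * (X + C (u 2)) ^ 0 * (X + C (u 3)) ^ 0)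
          = C (t i) * ((X + C (u 0)) ^ (E i 0) * (X + C (u 1)) ^ 0) := by ring
      rw [hshape] at hbupB
      obtain ⟨he, -, -⟩ := S12.MCL (hund 0 1 (by decide)) (e := E i 0) (f := 0) (ht i)
        (by omega) hbupB
      exact hk' he
    · have hk' : E i 1 ≠ 0 := hk
      rw [hzero 0 (by decide), hzero 2 (by decide), hzero 3 (by decide)] at hbupB
      have hshape : C (t i) * ((X + C (u 0)) ^ 0 * (X + C (u 1)) ^ (E i 1)
          * (X + C (u 2)) ^ 0 * (X + C (u 3)) ^ 0)
          = C (t i) * ((X + C (u 1)) ^ (E i 1) * (X + C (u 0)) ^ 0) := by ring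
      rw [hshape] at hbupB
      obtain ⟨he, -, -⟩ := S12.MCL (hund 1 0 (by decide)) (e := E i 1) (f := 0) (ht i)
        (by omega) hbupB
      exact hk' he
    · have hk' : E i 2 ≠ 0 := hk
      rw [hzero 0 (by decide), hzero 1 (by decide), hzero 3 (by decide)] at hbupB
      have hshape : C (t i) * ((X + C (u 0)) ^ 0 * (X + C (u 1)) ^ 0
          * (X + C (u 2)) ^ (E i 2) * (X + C (u 3)) ^ 0)
          = C (t i) * ((X + C (u 2)) ^ (E i 2) * (X + C (u 0)) ^ 0) := by ring
      rw [hshape] at hbupB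
      obtain ⟨he, -, -⟩ := S12.MCL (hund 2 0 (by decide)) (e := E i 2) (f := 0) (ht i)
        (by omega) hbupB
      exact hk' he
    · have hk' : E i 3 ≠ 0 := hk
      rw [hzero 0 (by decide), hzero 1 (by decide), hzero 2 (by decide)] at hbupB
      have hshape : C (t i) * ((X + C (u 0)) ^ 0 * (X + C (u 1)) ^ 0
          * (X + C (u 2)) ^ 0 * (X + C (u 3)) ^ (E i 3))
          = C (t i) * ((X + C (u 3)) ^ (E i 3) * (X + C (u 0)) ^ 0) := by ring
      rw [hshape] at hbupB
      obtain ⟨he, -, -⟩ := S12.MCL (hund 3 0 (by decide)) (e := E i 3) (f := 0) (ht i)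
        (by omega) hbupB
      exact hk' he
  -- r = 1
  have hr1 : r = 1 := by
    by_contra hrne
    have hr2 : 2 ≤ r := by omega
    have hmk : ∀ (n : ℕ) (hn : n < r + 1) (m : ℕ) (hm : m < r + 1), n ≠ m →
        (⟨n, hn⟩ : Fin (r + 1)) ≠ ⟨m, hm⟩ := by
      intro n hn m hm hnm h
      exact hnm (congrArg Fin.val h)
    obtain ⟨k0, k0', hk0, h0a, h0b⟩ := htwo ⟨0, by omega⟩
    obtain ⟨k1, k1', hk1, h1a, h1b⟩ := htwo ⟨1, by omega⟩
    obtain ⟨k2, k2', hk2, h2a, h2b⟩ := htwo ⟨2, by omega⟩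
    have hpairmem : ∀ (i : Fin (r + 1)) (kA kA' x : Fin 4), E i kA ≠ 0 → E i kA' ≠ 0 →
        x ∈ ({kA, kA'} : Finset (Fin 4)) → E i x ≠ 0 := by
      intro i kA kA' x hA1 hA2 hx
      rcases Finset.mem_insert.mp hx with rfl | hx'
      · exact hA1
      · rw [Finset.mem_singleton] at hx'
        subst hx'
        exact hA2
    have hDisjF : ∀ (iA iB : Fin (r + 1)) (kA kA' kB kB' : Fin 4), iA ≠ iB →
        E iA kA ≠ 0 → E iA kA' ≠ 0 → E iB kB ≠ 0 → E iB kB' ≠ 0 →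
        Disjoint ({kA, kA'} : Finset (Fin 4)) {kB, kB'} := by
      intro iA iB kA kA' kB kB' hne hA1 hA2 hB1 hB2
      rw [Finset.disjoint_left]
      intro x hxA hxB
      exact hdisj iA iB x hne (hpairmem iA kA kA' x hA1 hA2 hxA)
        (hpairmem iB kB kB' x hB1 hB2 hxB)
    have hd01 := hDisjF _ _ k0 k0' k1 k1' (hmk 0 (by omega) 1 (by omega) (by omega)) h0a h0b h1a h1b
    have hd02 := hDisjF _ _ k0 k0' k2 k2' (hmk 0 (by omega) 2 (by omega) (by omega)) h0a h0b h2a h2b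
    have hd12 := hDisjF _ _ k1 k1' k2 k2' (hmk 1 (by omega) 2 (by omega) (by omega)) h1a h1b h2a h2b
    have hcard2 : ∀ (kA kA' : Fin 4), kA ≠ kA' → ({kA, kA'} : Finset (Fin 4)).card = 2 := by
      intro kA kA' hne
      rw [Finset.card_insert_of_notMem (Finset.notMem_singleton.mpr hne), Finset.card_singleton]
    have hbig : (({k0, k0'} ∪ {k1, k1'} ∪ {k2, k2'} : Finset (Fin 4))).card = 6 := by
      rw [Finset.card_union_of_disjoint (Finset.disjoint_union_left.mpr ⟨hd02, hd12⟩),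
        Finset.card_union_of_disjoint hd01, hcard2 _ _ hk0, hcard2 _ _ hk1, hcard2 _ _ hk2]
    have hle := Finset.card_le_univ (({k0, k0'} ∪ {k1, k1'} ∪ {k2, k2'} : Finset (Fin 4)))
    rw [hbig, Fintype.card_fin] at hle
    omega
  subst hr1
  -- exactly two components
  have hAB : A = B 0 * B 1 := by
    rw [hprod, Fin.prod_univ_two]
  obtain ⟨ka, ka', hkaa, ha1, ha2⟩ := htwo 0
  obtain ⟨kb, kb', hkbb, hb1, hb2⟩ := htwo 1
  -- support of component i is within its pair
  have hTsub : ∀ (i : Fin 2) (kA kA' kB kB' : Fin 4), kA ≠ kA' → kB ≠ kB' →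
      E i kA ≠ 0 → E i kA' ≠ 0 → E (i + 1) kB ≠ 0 → E (i + 1) kB' ≠ 0 →
      ∀ x : Fin 4, x ≠ kA → x ≠ kA' → E i x = 0 := by
    intro i kA kA' kB kB' hne1 hne2 hA1 hA2 hB1 hB2 x hx1 hx2
    by_contra hxx
    -- then {kA, kA', x} (card 3) disjoint from {kB,kB'} (card 2) in Fin 4
    have hii : i ≠ i + 1 := by
      fin_cases i <;> decide
    have hdisj3 : Disjoint ({x, kA, kA'} : Finset (Fin 4)) {kB, kB'} := by
      rw [Finset.disjoint_left]
      intro y hy hyB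
      have hyne : E i y ≠ 0 := by
        rcases Finset.mem_insert.mp hy with rfl | hy'
        · exact hxx
        · rcases Finset.mem_insert.mp hy' with rfl | hy''
          · exact hA1
          · rw [Finset.mem_singleton] at hy''
            subst hy''
            exact hA2
      have hyyB : E (i + 1) y ≠ 0 := by
        rcases Finset.mem_insert.mp hyB with rfl | hy'
        · exact hB1
        · rw [Finset.mem_singleton] at hy'
          subst hy'
          exact hB2
      exact hdisj i (i + 1) y hii hyne hyyB
    have hc3 : ({x, kA, kA'} : Finset (Fin 4)).card = 3 := by
      rw [Finset.card_insert_of_notMem (by simp [hx1, hx2]),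
        Finset.card_insert_of_notMem (Finset.notMem_singleton.mpr hne1),
        Finset.card_singleton]
    have hc2 : ({kB, kB'} : Finset (Fin 4)).card = 2 := by
      rw [Finset.card_insert_of_notMem (Finset.notMem_singleton.mpr hne2),
        Finset.card_singleton]
    have hbig : (({x, kA, kA'} ∪ {kB, kB'} : Finset (Fin 4))).card = 5 := by
      rw [Finset.card_union_of_disjoint hdisj3, hc3, hc2]
    have hle := Finset.card_le_univ (({x, kA, kA'} ∪ {kB, kB'} : Finset (Fin 4)))
    rw [hbig, Fintype.card_fin] at hle
    omega
  have hz0 : ∀ x : Fin 4, x ≠ ka → x ≠ ka' → E 0 x = 0 :=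
    hTsub 0 ka ka' kb kb' hkaa hkbb ha1 ha2 hb1 hb2
  have hz1 : ∀ x : Fin 4, x ≠ kb → x ≠ kb' → E 1 x = 0 := by
    have := hTsub 1 kb kb' ka ka' hkbb hkaa hb1 hb2
    intro x hx1 hx2
    refine this ?_ ?_ x hx1 hx2
    · show E (1 + 1 : Fin 2) ka ≠ 0
      have h2 : (1 + 1 : Fin 2) = 0 := by decide
      rw [h2]
      exact ha1
    · show E (1 + 1 : Fin 2) ka' ≠ 0
      have h2 : (1 + 1 : Fin 2) = 0 := by decide
      rw [h2]
      exact ha2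
  -- canonical pair shape for components
  have hcompshape : ∀ (i : Fin 2) (kA kA' : Fin 4), kA ≠ kA' →
      (∀ x : Fin 4, x ≠ kA → x ≠ kA' → E i x = 0) →
      B i = C (t i) * ((X + C (u kA)) ^ (E i kA) * (X + C (u kA')) ^ (E i kA')) := by
    intro i kA kA' hne hzero
    rw [hBeq i]
    congr 1
    have h4 : (X + C (u 0)) ^ (E i 0) * (X + C (u 1)) ^ (E i 1) * (X + C (u 2)) ^ (E i 2)
        * (X + C (u 3)) ^ (E i 3) = ∏ k : Fin 4, (X + C (u k)) ^ (E i k) :=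
      (Fin.prod_univ_four (fun k => (X + C (u k)) ^ (E i k))).symm
    rw [h4, ← Finset.prod_subset (Finset.subset_univ ({kA, kA'} : Finset (Fin 4)))
      (fun x _ hnx => ?_), Finset.prod_pair hne]
    have hxz : E i x = 0 := by
      refine hzero x ?_ ?_ <;> intro hh <;> subst hh <;> simp at hnx
    rw [hxz, pow_zero]
  have hB0 := hcompshape 0 ka ka' hkaa hz0
  have hB1 := hcompshape 1 kb kb' hkbb hz1
  -- MCL on both components
  have hbup0 := (hcomp 0).1
  rw [hB0] at hbup0
  obtain ⟨heq0, hsum0, hT0⟩ := S12.MCL (hund ka ka' hkaa) (ht 0) (by omega) hbup0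
  have hbup1 := (hcomp 1).1
  rw [hB1] at hbup1
  obtain ⟨heq1, hsum1, hT1⟩ := S12.MCL (hund kb kb' hkbb) (ht 1) (by omega) hbup1
  have hpp0 := hpair ka ka' hkaa hsum0
  have hpp1 := hpair kb kb' hkbb hsum1
  have hdisjab : Disjoint ({ka, ka'} : Finset (Fin 4)) {kb, kb'} := by
    rw [Finset.disjoint_left]
    intro x hx hx'
    have h1 : E 0 x ≠ 0 := by
      rcases Finset.mem_insert.mp hx with rfl | hx2
      · exact ha1
      · rw [Finset.mem_singleton] at hx2
        subst hx2
        exact ha2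
    have h2 : E 1 x ≠ 0 := by
      rcases Finset.mem_insert.mp hx' with rfl | hx2
      · exact hb1
      · rw [Finset.mem_singleton] at hx2
        subst hx2
        exact hb2
    exact hdisj 0 1 x (by decide) h1 h2
  have hcanon : ∀ (i : Fin 2) (kA kA' : Fin 4) (_ : kA ≠ kA') (p q : Fin 4),
      ({kA, kA'} : Finset (Fin 4)) = {p, q} → E i kA = E i kA' →
      B i = C (t i) * ((X + C (u kA)) ^ (E i kA) * (X + C (u kA')) ^ (E i kA')) →
      B i = C (t i) * ((X + C (u p)) ^ (E i kA) * (X + C (u q)) ^ (E i kA)) := by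
    intro i kA kA' hne p q hset heqi hBi
    have hkA : kA = p ∨ kA = q := by
      have := hset ▸ Finset.mem_insert_self kA {kA'}
      simpa using this
    have hkA' : kA' = p ∨ kA' = q := by
      have := hset ▸ Finset.mem_insert_of_mem (Finset.mem_singleton_self kA')
      simpa using this
    rcases hkA with rfl | rfl <;> rcases hkA' with rfl | rfl
    · exact absurd rfl hne
    · rw [hBi, heqi]
    · rw [hBi, heqi]
      ring
    · exact absurd rfl hne
  have hfin : ∃ g h : ℕ, g ∈ TSet ∧ h ∈ TSet ∧ a = g ∧ b = g ∧ c = h ∧ d = h := by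
    have hdistinct := fun (i j : Fin 4) (hij : i ≠ j) => hund i j hij
    rcases hpp0 with hpp0 | hpp0 <;> rcases hpp1 with hpp1 | hpp1
    · exfalso
      rw [hpp0, hpp1] at hdisjab
      exact (Finset.disjoint_left.mp hdisjab (Finset.mem_insert_self 0 {1}))
        (Finset.mem_insert_self 0 {1})
    · have hc0 := hcanon 0 ka ka' hkaa 0 1 hpp0 heq0 hB0
      have hc1 := hcanon 1 kb kb' hkbb 2 3 hpp1 heq1 hB1
      have hAfin : A = C (t 0 * t 1) * ((X + C (u 0)) ^ (E 0 ka) * (X + C (u 1)) ^ (E 0 ka)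
          * (X + C (u 2)) ^ (E 1 kb) * (X + C (u 3)) ^ (E 1 kb)) := by
        rw [hAB, hc0, hc1, C_mul]
        ring
      obtain ⟨hag, hbg, hch, hdh⟩ := S12.exponents_match (hund 0 1 (by decide))
        (hund 0 2 (by decide)) (hund 0 3 (by decide)) (hund 1 2 (by decide))
        (hund 1 3 (by decide)) (hund 2 3 (by decide)) (mul_ne_zero (ht 0) (ht 1))
        (hA'.symm.trans hAfin)
      exact ⟨E 0 ka, E 1 kb, hT0, hT1, hag, hbg, hch, hdh⟩
    · have hc0 := hcanon 0 ka ka' hkaa 2 3 hpp0 heq0 hB0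
      have hc1 := hcanon 1 kb kb' hkbb 0 1 hpp1 heq1 hB1
      have hAfin : A = C (t 0 * t 1) * ((X + C (u 0)) ^ (E 1 kb) * (X + C (u 1)) ^ (E 1 kb)
          * (X + C (u 2)) ^ (E 0 ka) * (X + C (u 3)) ^ (E 0 ka)) := by
        rw [hAB, hc0, hc1, C_mul]
        ring
      obtain ⟨hag, hbg, hch, hdh⟩ := S12.exponents_match (hund 0 1 (by decide))
        (hund 0 2 (by decide)) (hund 0 3 (by decide)) (hund 1 2 (by decide))
        (hund 1 3 (by decide)) (hund 2 3 (by decide)) (mul_ne_zero (ht 0) (ht 1))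
        (hA'.symm.trans hAfin)
      exact ⟨E 1 kb, E 0 ka, hT1, hT0, hag, hbg, hch, hdh⟩
    · exfalso
      rw [hpp0, hpp1] at hdisjab
      exact (Finset.disjoint_left.mp hdisjab (Finset.mem_insert_self 2 {3}))
        (Finset.mem_insert_self 2 {3})
  obtain ⟨g, h, hgT, hhT, hag, hbg, hch, hdh⟩ := hfin
  have hab : a = b := hag.trans hbg.symm
  have hcd : c = d := hch.trans hdh.symm
  have haT : a ∈ TSet := hag ▸ hgT
  have hbT : b ∈ TSet := hbg ▸ hgT
  have hcT : c ∈ TSet := hch ▸ hhT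
  have hdT : d ∈ TSet := hdh ▸ hhT
  have hapos : 0 < a := haT.1
  have hbpos : 0 < b := hbT.1
  have hcpos : 0 < c := hcT.1
  have hdpos : 0 < d := hdT.1
  -- omega count
  have homega : omegaCount A = 4 := by
    have hsetfour : {P : Polynomial F4 | P.Monic ∧ Irreducible P ∧ P ∣ A}
        = {X + C (u 0), X + C (u 1), X + C (u 2), X + C (u 3)} := by
      ext P
      simp only [Set.mem_setOf_eq, Set.mem_insert_iff, Set.mem_singleton_iff]
      constructor
      · rintro ⟨hPm, hPi, hPd⟩
        rw [hA'] at hPd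
        have hPp : Prime P := hPi.prime
        have hfink : ∀ k : Fin 4, P ∣ (X + C (u k)) → P = X + C (u k) := fun k hk =>
          eq_of_monic_of_associated hPm (S12.lin_monic _)
            (hPi.associated_of_dvd (S12.lin_irr _) hk)
        rcases hPp.dvd_mul.mp hPd with h3 | h3
        · rcases hPp.dvd_mul.mp h3 with h2 | h2
          · rcases hPp.dvd_mul.mp h2 with h1 | h1
            · exact Or.inl (hfink 0 (hPp.dvd_of_dvd_pow h1))
            · exact Or.inr (Or.inl (hfink 1 (hPp.dvd_of_dvd_pow h1)))
          · exact Or.inr (Or.inr (Or.inl (hfink 2 (hPp.dvd_of_dvd_pow h2))))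
        · exact Or.inr (Or.inr (Or.inr (hfink 3 (hPp.dvd_of_dvd_pow h3))))
      · intro hP
        rcases hP with rfl | rfl | rfl | rfl
        · refine ⟨S12.lin_monic _, S12.lin_irr _, ?_⟩
          rw [hA']
          exact dvd_mul_of_dvd_left (dvd_mul_of_dvd_left
            (dvd_mul_of_dvd_left (dvd_pow_self _ (by omega)) _) _) _
        · refine ⟨S12.lin_monic _, S12.lin_irr _, ?_⟩
          rw [hA']
          exact dvd_mul_of_dvd_left (dvd_mul_of_dvd_left
            (dvd_mul_of_dvd_right (dvd_pow_self _ (by omega)) _) _) _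
        · refine ⟨S12.lin_monic _, S12.lin_irr _, ?_⟩
          rw [hA']
          exact dvd_mul_of_dvd_left (dvd_mul_of_dvd_right (dvd_pow_self _ (by omega)) _) _
        · refine ⟨S12.lin_monic _, S12.lin_irr _, ?_⟩
          rw [hA']
          exact dvd_mul_of_dvd_right (dvd_pow_self _ (by omega)) _
    rw [omegaCount, hsetfour]
    have hne01 : (X + C (u 0) : Polynomial F4) ≠ X + C (u 1) :=
      fun hh => hund 0 1 (by decide) (S12.lin_inj hh)
    have hne02 : (X + C (u 0) : Polynomial F4) ≠ X + C (u 2) :=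
      fun hh => hund 0 2 (by decide) (S12.lin_inj hh)
    have hne03 : (X + C (u 0) : Polynomial F4) ≠ X + C (u 3) :=
      fun hh => hund 0 3 (by decide) (S12.lin_inj hh)
    have hne12 : (X + C (u 1) : Polynomial F4) ≠ X + C (u 2) :=
      fun hh => hund 1 2 (by decide) (S12.lin_inj hh)
    have hne13 : (X + C (u 1) : Polynomial F4) ≠ X + C (u 3) :=
      fun hh => hund 1 3 (by decide) (S12.lin_inj hh)
    have hne23 : (X + C (u 2) : Polynomial F4) ≠ X + C (u 3) :=
      fun hh => hund 2 3 (by decide) (S12.lin_inj hh)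
    rw [Set.ncard_insert_of_notMem (by simp [hne01, hne02, hne03]),
      Set.ncard_insert_of_notMem (by simp [hne12, hne13]),
      Set.ncard_insert_of_notMem (by simp [hne23]), Set.ncard_singleton]
  -- final product form
  have hCa : (C α) ^ 2 + C α + 1 = (0 : Polynomial F4) := by
    have hmap := congrArg (fun x : F4 => (C x : Polynomial F4)) hα
    simpa using hmap
  have hq1 : ((X : Polynomial F4) * (X + 1)) = X ^ 2 + X := by ring
  have hq2 : ((X + C α) * (X + C α + 1) : Polynomial F4) = X ^ 2 + X + 1 := by
    linear_combination hCa + (X * C α - 1) * twoR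
  have hfinalprod : A = (X ^ 2 + X) ^ a * (X ^ 2 + X + 1) ^ c := by
    rw [hA, ← hab, ← hcd]
    calc (X : Polynomial F4) ^ a * (X + 1) ^ a * (X + C α) ^ c * (X + C α + 1) ^ c
        = ((X : Polynomial F4) * (X + 1)) ^ a * ((X + C α) * (X + C α + 1)) ^ c := by
          rw [mul_pow, mul_pow]
          ring
      _ = (X ^ 2 + X) ^ a * (X ^ 2 + X + 1) ^ c := by rw [hq1, hq2]
  exact ⟨homega, haT, hbT, hcT, hdT, hab, hcd, (X ^ 2 + X) ^ a, ⟨a, haT, Or.inl rfl⟩,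
    (X ^ 2 + X + 1) ^ c, ⟨c, hcT, Or.inr rfl⟩, hfinalprod⟩
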